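/- The Buchstab function w satisfies w(u) ≤ 1/1.763 for all u ≥ 2. -/

import Mathlib

/-- Key numerical fact: `log 1.763 < 1/1.763`. -/
lemma buchstab_aux_log_lt : Real.log 1.763 < 1 / 1.763 := by
  rw [Real.log_lt_iff_lt_exp (by norm_num)]
  have h := Real.sum_le_exp_of_nonneg (x := 1 / 1.763) (by norm_num) 6
  refine lt_of_lt_of_le ?_ h
  rw [show (6 : ℕ) = 5 + 1 by rfl]
  simp only [Finset.sum_range_succ, Finset.sum_range_zero]
  norm_num [Nat.factorial]

/-- The Buchstab function `w` satisfies `w u ≤ 1/1.763` for all `u ≥ 2`. -/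
theorem buchstab_le_of_two_le
    (w : ℝ → ℝ)
    (hwcont : ContinuousOn w (Set.Ici 1))
    (hwinit : ∀ u : ℝ, 1 ≤ u → u ≤ 2 → w u = 1 / u)
    (hwdiff : ∀ u : ℝ, 2 ≤ u →
      HasDerivWithinAt (fun x => x * w x) (w (u - 1)) (Set.Ici 2) u) :
    ∀ u : ℝ, 2 ≤ u → w u ≤ 1 / 1.763 := by
  set M : ℝ := 1 / 1.763 with hM
  have hlog : Real.log 1.763 < M := buchstab_aux_log_lt
  -- The function t ↦ t * w t is continuous on [1, ∞)
  have hcontmul : ContinuousOn (fun t : ℝ => t * w t) (Set.Ici 1) :=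
    continuousOn_id.mul hwcont
  -- Explicit formula on [2,3]: u * w u = 1 + log (u - 1)
  have hform : ∀ u ∈ Set.Icc (2 : ℝ) 3, u * w u = 1 + Real.log (u - 1) := by
    intro u hu
    set f : ℝ → ℝ := fun t => t * w t - Real.log (t - 1) with hf
    have hfcont : ContinuousOn f (Set.Icc 2 3) := by
      apply ContinuousOn.sub
      · exact hcontmul.mono (fun x hx => le_trans one_le_two hx.1)
      · apply ContinuousOn.log
        · exact (continuousOn_id.sub continuousOn_const)
        · intro x hx
          simp only [Set.mem_Icc] at hx
          have : (1 : ℝ) ≤ x - 1 := by linarith [hx.1]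
          intro h
          linarith
    have hfderiv : ∀ x ∈ Set.Ico (2 : ℝ) 3, HasDerivWithinAt f 0 (Set.Ici x) x := by
      intro x hx
      have hx1 : (1 : ℝ) ≤ x - 1 := by linarith [hx.1]
      have hx2 : x - 1 ≤ 2 := by linarith [hx.2.le]
      have hxne : x - 1 ≠ 0 := by linarith
      have hd1 : HasDerivWithinAt (fun t : ℝ => t * w t) (w (x - 1)) (Set.Ici x) x :=
        (hwdiff x hx.1).mono (Set.Ici_subset_Ici.2 hx.1)
      have hd2 : HasDerivAt (fun t : ℝ => Real.log (t - 1)) (1 / (x - 1)) x := by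
        have h := (Real.hasDerivAt_log hxne).comp x ((hasDerivAt_id x).sub_const 1)
        simpa [one_div, Function.comp_def] using h
      have hw : w (x - 1) = 1 / (x - 1) := hwinit (x - 1) hx1 hx2
      have := hd1.sub hd2.hasDerivWithinAt
      rw [hw] at this
      simpa [hf, Pi.sub_def] using this
    have hconst := constant_of_has_deriv_right_zero hfcont hfderiv u hu
    have hf2 : f 2 = 1 := by
      simp only [hf]
      rw [hwinit 2 one_le_two le_rfl]
      norm_num
    rw [hf2] at hconst
    have : u * w u - Real.log (u - 1) = 1 := hconst
    linarith
  -- Base case: w u ≤ M on [2,3]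
  have hbase : ∀ u ∈ Set.Icc (2 : ℝ) 3, w u ≤ M := by
    intro u hu
    have hu0 : (0 : ℝ) < u := by linarith [hu.1]
    have hu1 : (0 : ℝ) < u - 1 := by linarith [hu.1]
    -- tangent line bound: log (u-1) ≤ log 1.763 + ((u-1)/1.763 - 1)
    have htan : Real.log (u - 1) ≤ Real.log 1.763 + ((u - 1) / 1.763 - 1) := by
      have h1 : Real.log ((u - 1) / 1.763) ≤ (u - 1) / 1.763 - 1 :=
        Real.log_le_sub_one_of_pos (by positivity)
      have h2 : Real.log ((u - 1) / 1.763) = Real.log (u - 1) - Real.log 1.763 :=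
        Real.log_div (by linarith) (by norm_num)
      linarith
    have hkey : u * w u ≤ u * M := by
      rw [hform u hu]
      have : (1 : ℝ) + Real.log (u - 1) ≤ (u - 1) / 1.763 + M := by linarith
      have heq : (u - 1) / 1.763 + M = u * M := by rw [hM]; ring
      exact this.trans (le_of_eq heq)
    exact le_of_mul_le_mul_left hkey hu0
  -- Inductive step over intervals [2, n+3]
  have main : ∀ n : ℕ, ∀ u : ℝ, 2 ≤ u → u ≤ (n : ℝ) + 3 → w u ≤ M := by
    intro n
    induction n with
    | zero =>
      intro u hu hu3
      exact hbase u ⟨hu, by simpa using hu3⟩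
    | succ n ih =>
      intro u hu hu3
      by_cases hu3' : u ≤ 3
      · exact hbase u ⟨hu, hu3'⟩
      push_neg at hu3'
      push_cast at hu3
      have hw3 : w 3 ≤ M := hbase 3 ⟨by norm_num, le_rfl⟩
      set g : ℝ → ℝ := fun t => M * t - t * w t with hg
      have hmono : MonotoneOn g (Set.Icc 3 u) := by
        apply monotoneOn_of_hasDerivWithinAt_nonneg (convex_Icc 3 u)
          (f' := fun x => M - w (x - 1))
        · apply ContinuousOn.sub
          · exact (continuousOn_const.mul continuousOn_id)
          · exact hcontmul.mono (fun x hx => by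
              simp only [Set.mem_Icc] at hx; simp only [Set.mem_Ici]; linarith [hx.1])
        · intro x hx
          rw [interior_Icc] at hx
          have hx2 : (2 : ℝ) ≤ x := by linarith [hx.1]
          have hd : HasDerivAt (fun t : ℝ => t * w t) (w (x - 1)) x :=
            (hwdiff x hx2).hasDerivAt (Ici_mem_nhds (by linarith [hx.1]))
          have hMd : HasDerivAt (fun t : ℝ => M * t) M x := by
            simpa using (hasDerivAt_id x).const_mul M
          exact (hMd.sub hd).hasDerivWithinAt
        · intro x hx
          rw [interior_Icc] at hx
          have : w (x - 1) ≤ M := ih (x - 1) (by linarith [hx.1]) (by linarith [hx.2])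
          linarith
      have h3u : (3 : ℝ) ≤ u := hu3'.le
      have hg3u : g 3 ≤ g u :=
        hmono ⟨le_rfl, h3u⟩ ⟨h3u, le_rfl⟩ h3u
      simp only [hg] at hg3u
      have hu0 : (0 : ℝ) < u := by linarith
      have hkey : u * w u ≤ u * M := by nlinarith
      exact le_of_mul_le_mul_left hkey hu0
  intro u hu
  obtain ⟨n, hn⟩ := exists_nat_ge u
  exact main n u hu (by linarith)
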